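/- Let R be a commutative ring and let M and U be R-modules such that M generates U and U is M-torsionless. Then there is a well-defined ring homomorphism σ' : Z(End_R(M)) → Z(End_R(U)) determined by the property that for every q ∈ Z(End_R(M)), every finite family φ_i ∈ Hom_R(M,U) and m_i ∈ M, one has σ'(q)(Σ_i φ_i(m_i)) = Σ_i φ_i(q(m_i)). Moreover, if M is also U-torsionless, then σ' is injective. -/

import Mathlib

universe u v w

/-- Suzuki's theorem.  Let `R` be a commutative ring and `M`, `U` modules such that `M`
generates `U` (the images of all maps `M →ₗ[R] U` span `U`) and `U` is `M`-torsionless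
(every nonzero `u : U` is detected by some map `U →ₗ[R] M`).  Then there is a ring
homomorphism `σ' : Z(End_R M) → Z(End_R U)` with
`σ'(q)(Σ φᵢ(mᵢ)) = Σ φᵢ(q(mᵢ))` for all finite families `φᵢ : M →ₗ[R] U`, `mᵢ : M`;
moreover if `M` is `U`-torsionless then `σ'` is injective. -/
theorem center_end_hom_of_generates (R : Type u) (M : Type v) (U : Type w) [CommRing R]
    [AddCommGroup M] [Module R M] [AddCommGroup U] [Module R U]
    (hgen : (⨆ φ : M →ₗ[R] U, LinearMap.range φ) = ⊤)
    (htorsionless : ∀ u : U, u ≠ 0 → ∃ d : U →ₗ[R] M, d u ≠ 0) :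
    ∃ σ' : Subalgebra.center R (Module.End R M) →+* Subalgebra.center R (Module.End R U),
      (∀ (q : Subalgebra.center R (Module.End R M)) (n : ℕ)
          (φ : Fin n → (M →ₗ[R] U)) (m : Fin n → M),
        (σ' q : Module.End R U) (∑ i, φ i (m i))
          = ∑ i, φ i ((q : Module.End R M) (m i))) ∧
      ((∀ x : M, x ≠ 0 → ∃ α : M →ₗ[R] U, α x ≠ 0) → Function.Injective σ') := by
  classical
  -- the big "free-ish" module covering `U`
  let π : ((M →ₗ[R] U) →₀ M) →ₗ[R] U := Finsupp.lsum R fun φ => φ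
  have πsingle : ∀ (φ : M →ₗ[R] U) (m : M), π (Finsupp.single φ m) = φ m := by
    intro φ m; simp [π, Finsupp.lsum_single]
  have πapply : ∀ y : ((M →ₗ[R] U) →₀ M), π y = y.sum fun φ m => φ m := by
    intro y; simp [π, Finsupp.lsum_apply]
  have hπ : Function.Surjective π := by
    rw [← LinearMap.range_eq_top, ← top_le_iff, ← hgen]
    refine iSup_le fun φ => ?_
    rintro u ⟨m, rfl⟩
    exact ⟨Finsupp.single φ m, πsingle φ m⟩
  let Q : Module.End R M → (((M →ₗ[R] U) →₀ M) →ₗ[R] ((M →ₗ[R] U) →₀ M)) := fun q => Finsupp.mapRange.linearMap q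
  have Qsingle : ∀ (q : Module.End R M) (φ : M →ₗ[R] U) (m : M),
      Q q (Finsupp.single φ m) = Finsupp.single φ (q m) := by
    intro q φ m; simp [Q, Finsupp.mapRange_single]
  have Qapply : ∀ (q : Module.End R M) (y : ((M →ₗ[R] U) →₀ M)), Q q y = Finsupp.mapRange q (map_zero q) y := by
    intro q y; rfl
  -- the key well-definedness lemma, using M-torsionlessness of U
  have hker : ∀ q : Subalgebra.center R (Module.End R M), ∀ x : ((M →ₗ[R] U) →₀ M),
      π x = 0 → π (Q q.1 x) = 0 := by
    intro q x hx
    by_contra h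
    obtain ⟨d, hd⟩ := htorsionless _ h
    apply hd
    have hcomm : ∀ (φ : M →ₗ[R] U) (m : M), d (φ (q.1 m)) = q.1 (d (φ m)) := by
      intro φ m
      have h2 := Subalgebra.mem_center_iff.mp q.2 (d ∘ₗ φ)
      have := congrFun (congrArg DFunLike.coe h2) m
      simpa [Module.End.mul_apply] using this
    calc d (π (Q q.1 x))
        = x.sum fun φ m => d (φ (q.1 m)) := by
          rw [Qapply, πapply, map_finsuppSum,
            Finsupp.sum_mapRange_index (by intro φ; simp)]
      _ = x.sum fun φ m => q.1 (d (φ m)) := Finsupp.sum_congr fun φ _ => hcomm φ _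
      _ = q.1 (d (π x)) := by
          rw [πapply, map_finsuppSum, map_finsuppSum]
      _ = 0 := by rw [hx]; simp
  have hker2 : ∀ q : Subalgebra.center R (Module.End R M), ∀ x y : ((M →ₗ[R] U) →₀ M),
      π x = π y → π (Q q.1 x) = π (Q q.1 y) := by
    intro q x y hxy
    have := hker q (x - y) (by rw [map_sub, hxy, sub_self])
    rw [map_sub, map_sub, sub_eq_zero] at this
    exact this
  let s : U → ((M →ₗ[R] U) →₀ M) := fun u => (hπ u).choose
  have hs : ∀ u, π (s u) = u := fun u => (hπ u).choose_spec
  let e : Subalgebra.center R (Module.End R M) → Module.End R U := fun q =>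
    { toFun := fun u => π (Q q.1 (s u))
      map_add' := by
        intro u v
        have h1 : π (s (u + v)) = π (s u + s v) := by rw [map_add, hs, hs, hs]
        show π (Q q.1 (s (u + v))) = π (Q q.1 (s u)) + π (Q q.1 (s v))
        rw [hker2 q _ _ h1, map_add, map_add]
      map_smul' := by
        intro c u
        have h1 : π (s (c • u)) = π (c • s u) := by rw [map_smul, hs, hs]
        show π (Q q.1 (s (c • u))) = c • π (Q q.1 (s u))
        rw [hker2 q _ _ h1, map_smul, map_smul] }
  have espec : ∀ q (x : ((M →ₗ[R] U) →₀ M)), e q (π x) = π (Q q.1 x) := by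
    intro q x
    exact hker2 q _ _ (hs (π x))
  have esingle : ∀ q (φ : M →ₗ[R] U) (m : M), e q (φ m) = φ (q.1 m) := by
    intro q φ m
    rw [← πsingle φ m, espec, Qsingle, πsingle]
  -- extensionality for endomorphisms of U via generators
  have ext0 : ∀ g h : Module.End R U,
      (∀ (φ : M →ₗ[R] U) (m : M), g (φ m) = h (φ m)) → g = h := by
    intro g h hgh
    ext u
    obtain ⟨x, rfl⟩ := hπ u
    induction x using Finsupp.induction_linear with
    | zero => simp
    | add a b ha hb => rw [map_add, map_add, map_add, ha, hb]
    | single φ m => rw [πsingle]; exact hgh φ m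
  have hmem : ∀ q, e q ∈ Subalgebra.center R (Module.End R U) := by
    intro q
    rw [Subalgebra.mem_center_iff]
    intro f
    refine ext0 _ _ fun φ m => ?_
    rw [Module.End.mul_apply, Module.End.mul_apply, esingle]
    calc f (φ (q.1 m)) = (f ∘ₗ φ) (q.1 m) := rfl
      _ = e q ((f ∘ₗ φ) m) := (esingle q (f ∘ₗ φ) m).symm
      _ = e q (f (φ m)) := rfl
  refine ⟨{ toFun := fun q => ⟨e q, hmem q⟩
            map_one' := ?_
            map_mul' := ?_
            map_zero' := ?_
            map_add' := ?_ }, ?_, ?_⟩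
  · refine Subtype.ext (ext0 _ _ fun φ m => ?_)
    rw [esingle]
    rfl
  · intro q₁ q₂
    refine Subtype.ext (ext0 _ _ fun φ m => ?_)
    show e (q₁ * q₂) (φ m) = (e q₁ * e q₂) (φ m)
    rw [esingle, Module.End.mul_apply, esingle, esingle]
    rfl
  · refine Subtype.ext (ext0 _ _ fun φ m => ?_)
    rw [esingle]
    simp
  · intro q₁ q₂
    refine Subtype.ext (ext0 _ _ fun φ m => ?_)
    show e (q₁ + q₂) (φ m) = (e q₁ + e q₂) (φ m)
    rw [esingle, LinearMap.add_apply, esingle, esingle, ← map_add]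
    rfl
  · intro q n φ m
    show e q (∑ i, φ i (m i)) = _
    rw [map_sum]
    exact Finset.sum_congr rfl fun i _ => esingle q (φ i) (m i)
  · intro htor
    intro q₁ q₂ h12
    have heq : e q₁ = e q₂ := congrArg Subtype.val h12
    refine Subtype.ext (LinearMap.ext fun m => ?_)
    by_contra hm
    have hm' : q₁.1 m - q₂.1 m ≠ 0 := sub_ne_zero.mpr hm
    obtain ⟨α, hα⟩ := htor _ hm'
    apply hα
    have h1 : e q₁ (α m) = α (q₁.1 m) := esingle q₁ α m
    have h2 : e q₂ (α m) = α (q₂.1 m) := esingle q₂ α m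
    rw [heq, h2] at h1
    rw [map_sub, ← h1, sub_self]
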